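/- arXiv:1912.12349 — 5 statements merged into one kernel-verified Lean document; each statement's English description precedes it below -/
import Mathlib

section
/- Let K ⊆ ℝ², let L(K) = ⋃ℒ(K) be the union of the dual family of K, and let e be the line {(x,y) : y = a₀·x + b₀} with (a₀,b₀) ∉ K. Then the projection of e ∩ L(K) to the x-axis equals the set {(b − b₀)/(a₀ − a) : (a,b) ∈ K, a ≠ a₀}; consequently e ∩ L(K) is the image of P_{(a₀,b₀)}(K) ∖ {(0,1),(0,−1)} under a locally Lipschitz function (the composition of the map sending a direction to minus the tangent of its angle with the Lipschitz map t ↦ (t, a₀·t + b₀)), and in particular e ∩ L(K) has one-dimensional Hausdorff measure zero whenever P_{(a₀,b₀)}(K) has measure zero. -/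
open MeasureTheory Set Metric
open scoped ENNReal Real

noncomputable section

abbrev Plane : Type := EuclideanSpace ℝ (Fin 2)

/-- The point (a, b) of the plane. -/
def pt (a b : ℝ) : Plane := (WithLp.equiv 2 (Fin 2 → ℝ)).symm ![a, b]

/-- The line `y = a x + b`. -/
def lineAB (a b : ℝ) : Set Plane := {p | p 1 = a * p 0 + b}

/-- The dual family of lines of a set `K ⊆ ℝ²`. -/
def dualLines (K : Set Plane) : Set (Set Plane) := {e | ∃ p ∈ K, e = lineAB (p 0) (p 1)}

/-- The union of the dual family of `K`. -/
def dualUnion (K : Set Plane) : Set Plane := ⋃₀ dualLines K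

/-- The radial projection of `A` from the point `v`, a subset of the unit circle `S¹ ⊆ ℝ²`. -/
def radialProj (v : Plane) (A : Set Plane) : Set Plane :=
  {y | ∃ x ∈ A, x ≠ v ∧ y = ‖x - v‖⁻¹ • (x - v)}

/-- The image of a `μH¹`-null set under a locally Lipschitz map is null. -/
lemma aux_null {s : Set Plane} {f : Plane → Plane}
    (hf : LocallyLipschitzOn s f) (hs : μH[1] s = 0) : μH[1] (f '' s) = 0 := by
  choose! c t ht hl using fun x (hx : x ∈ s) => hf hx
  obtain ⟨u, hus, huc, hcov⟩ := TopologicalSpace.countable_cover_nhdsWithin ht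
  have himg : f '' s ⊆ ⋃ x ∈ u, f '' (s ∩ t x) := by
    rintro _ ⟨y, hy, rfl⟩
    rcases mem_iUnion₂.1 (hcov hy) with ⟨x, hxu, hyx⟩
    exact mem_iUnion₂.2 ⟨x, hxu, ⟨y, ⟨hy, hyx⟩, rfl⟩⟩
  refine le_antisymm ((measure_mono himg).trans ?_) zero_le
  refine (measure_biUnion_le _ huc _).trans (le_of_eq ?_)
  rw [ENNReal.tsum_eq_zero]
  rintro ⟨x, hx⟩
  have hL : LipschitzOnWith (c x) f (s ∩ t x) :=
    (hl x (hus hx)).mono inter_subset_right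
  have h1 := hL.hausdorffMeasure_image_le (by norm_num : (0:ℝ) ≤ 1)
  have h2 : μH[1] (s ∩ t x) = 0 := measure_mono_null inter_subset_left hs
  refine le_antisymm (h1.trans ?_) zero_le
  rw [h2, mul_zero]

lemma plane_ext {p q : Plane} (h0 : p 0 = q 0) (h1 : p 1 = q 1) : p = q := by
  ext i; fin_cases i <;> assumption

lemma plane_norm (p : Plane) : ‖p‖ = Real.sqrt ((p 0)^2 + (p 1)^2) := by
  rw [EuclideanSpace.norm_eq, Fin.sum_univ_two]; norm_num

/-- Let `e` be the line `y = a₀x + b₀` with `(a₀,b₀) ∉ K`, and let `L(K)` be the union of the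
dual family of `K`. Then the projection of `e ∩ L(K)` to the x-axis is
`{(b−b₀)/(a₀−a) : (a,b) ∈ K, a ≠ a₀}`; consequently `e ∩ L(K)` is the image of
`P_{(a₀,b₀)}(K) ∖ {(0,1),(0,−1)}` under a locally Lipschitz function, and in particular
`e ∩ L(K)` is `μH¹`-null whenever the radial projection `P_{(a₀,b₀)}(K)` is null. -/
theorem line_intersection_dual (K : Set Plane) (a₀ b₀ : ℝ) (h : pt a₀ b₀ ∉ K) :
    ((fun p : Plane => p 0) '' (lineAB a₀ b₀ ∩ dualUnion K) =
      {r : ℝ | ∃ p ∈ K, p 0 ≠ a₀ ∧ r = (p 1 - b₀) / (a₀ - p 0)}) ∧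
    (∃ f : Plane → Plane,
      LocallyLipschitzOn (radialProj (pt a₀ b₀) K \ {pt 0 1, pt 0 (-1)}) f ∧
      lineAB a₀ b₀ ∩ dualUnion K =
        f '' (radialProj (pt a₀ b₀) K \ {pt 0 1, pt 0 (-1)})) ∧
    (μH[1] (radialProj (pt a₀ b₀) K) = 0 → μH[1] (lineAB a₀ b₀ ∩ dualUnion K) = 0) := by
  set v : Plane := pt a₀ b₀ with hv
  -- coordinates of v
  have hv0 : v 0 = a₀ := rfl
  have hv1 : v 1 = b₀ := rfl
  -- core membership characterization
  have memiff : ∀ q : Plane, q ∈ lineAB a₀ b₀ ∩ dualUnion K ↔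
      ∃ p ∈ K, p 0 ≠ a₀ ∧ q 0 = (p 1 - b₀) / (a₀ - p 0) ∧ q 1 = a₀ * q 0 + b₀ := by
    intro q
    constructor
    · rintro ⟨hq1, e, ⟨p, hp, rfl⟩, hq2⟩
      have hq1' : q 1 = a₀ * q 0 + b₀ := hq1
      have hq2' : q 1 = p 0 * q 0 + p 1 := hq2
      have hpa : p 0 ≠ a₀ := by
        intro he
        have hb : p 1 = b₀ := by rw [he] at hq2'; linarith
        have hpe : p = v := plane_ext (by rw [he, hv0]) (by rw [hb, hv1])
        exact h (hpe ▸ hp)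
      refine ⟨p, hp, hpa, ?_, hq1'⟩
      have hne : a₀ - p 0 ≠ 0 := sub_ne_zero.2 (Ne.symm hpa)
      field_simp
      linarith
    · rintro ⟨p, hp, hpa, hr, hq1⟩
      have hne : a₀ - p 0 ≠ 0 := sub_ne_zero.2 (Ne.symm hpa)
      refine ⟨hq1, lineAB (p 0) (p 1), ⟨p, hp, rfl⟩, ?_⟩
      show q 1 = p 0 * q 0 + p 1
      rw [hq1, hr]
      field_simp
      ring
  -- Part 1
  have part1 : (fun p : Plane => p 0) '' (lineAB a₀ b₀ ∩ dualUnion K) =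
      {r : ℝ | ∃ p ∈ K, p 0 ≠ a₀ ∧ r = (p 1 - b₀) / (a₀ - p 0)} := by
    ext r
    simp only [mem_image, mem_setOf_eq]
    constructor
    · rintro ⟨q, hq, rfl⟩
      rcases (memiff q).1 hq with ⟨p, hp, hpa, hr, _⟩
      exact ⟨p, hp, hpa, hr⟩
    · rintro ⟨p, hp, hpa, rfl⟩
      set r := (p 1 - b₀) / (a₀ - p 0)
      refine ⟨pt r (a₀ * r + b₀), (memiff _).2 ⟨p, hp, hpa, rfl, rfl⟩, rfl⟩
  -- Part 2: the map
  set f : Plane → Plane := fun u => (-(u 1) / (u 0)) • pt 1 a₀ + pt 0 b₀ with hfdef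
  have hf0 : ∀ u : Plane, f u 0 = -(u 1) / (u 0) := by
    intro u; simp [hfdef, pt]
  have hf1 : ∀ u : Plane, f u 1 = a₀ * (-(u 1) / (u 0)) + b₀ := by
    intro u; simp [hfdef, pt]; ring
  set S : Set Plane := radialProj v K \ {pt 0 1, pt 0 (-1)} with hS
  -- coordinates of the radial projection
  have hu0 : ∀ p : Plane, (‖p - v‖⁻¹ • (p - v)) 0 = ‖p - v‖⁻¹ * (p 0 - a₀) := by
    intro p; simp [hv0]
  have hu1 : ∀ p : Plane, (‖p - v‖⁻¹ • (p - v)) 1 = ‖p - v‖⁻¹ * (p 1 - b₀) := by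
    intro p; simp [hv1]
  -- points of S have nonzero first coordinate
  have claimA : ∀ u ∈ S, u 0 ≠ 0 := by
    rintro u ⟨⟨p, hp, hpv, rfl⟩, hpole⟩ h0
    have hnv : ‖p - v‖ ≠ 0 := by
      simpa [sub_eq_zero] using hpv
    rw [hu0] at h0
    have hp0 : p 0 = a₀ := by
      rcases mul_eq_zero.1 h0 with hc | hc
      · exact absurd hc (inv_ne_zero hnv)
      · linarith
    have hp1 : p 1 ≠ b₀ := by
      intro hb
      exact hpv (plane_ext hp0 hb)
    have hnorm : ‖p - v‖ = |p 1 - b₀| := by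
      rw [plane_norm]
      have e0 : (p - v) 0 = 0 := by simp [hv0, hp0]
      have e1 : (p - v) 1 = p 1 - b₀ := by simp [hv1]
      rw [e0, e1]
      simp [Real.sqrt_sq_eq_abs]
    have hu1' : (‖p - v‖⁻¹ • (p - v)) 1 = (p 1 - b₀) / |p 1 - b₀| := by
      rw [hu1, hnorm]; ring
    have hd : p 1 - b₀ ≠ 0 := sub_ne_zero.2 hp1
    rcases hd.lt_or_gt with hlt | hgt
    · apply hpole
      right
      refine plane_ext ?_ ?_
      · rw [hu0, hp0]; simp [pt]
      · rw [hu1', abs_of_neg hlt]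
        show _ = pt 0 (-1) 1
        rw [div_neg, div_self hd]; rfl
    · apply hpole
      left
      refine plane_ext ?_ ?_
      · rw [hu0, hp0]; simp [pt]
      · rw [hu1', abs_of_pos hgt, div_self hd]; rfl
  -- value of f on S
  have hval : ∀ p : Plane, p ≠ v → p 0 ≠ a₀ →
      f (‖p - v‖⁻¹ • (p - v)) 0 = (p 1 - b₀) / (a₀ - p 0) := by
    intro p hpv hpa
    have hnv : ‖p - v‖ ≠ 0 := by simpa [sub_eq_zero] using hpv
    have hne : p 0 - a₀ ≠ 0 := sub_ne_zero.2 hpa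
    rw [hf0, hu0, hu1]
    rw [neg_div, mul_div_mul_left _ _ (inv_ne_zero hnv)]
    rw [show a₀ - p 0 = -(p 0 - a₀) from by ring, div_neg]
  have part2 : lineAB a₀ b₀ ∩ dualUnion K = f '' S := by
    ext q
    rw [memiff q]
    constructor
    · rintro ⟨p, hp, hpa, hr, hq1⟩
      have hpv : p ≠ v := fun he => hpa (by rw [he, hv0])
      have hnv : ‖p - v‖ ≠ 0 := by simpa [sub_eq_zero] using hpv
      refine ⟨‖p - v‖⁻¹ • (p - v), ⟨⟨p, hp, hpv, rfl⟩, ?_⟩, ?_⟩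
      · have h0 : (‖p - v‖⁻¹ • (p - v)) 0 ≠ 0 := by
          rw [hu0]
          exact mul_ne_zero (inv_ne_zero hnv) (sub_ne_zero.2 hpa)
        rintro (he | he) <;>
          · apply h0; rw [he]; rfl
      · refine plane_ext ?_ ?_
        · rw [hval p hpv hpa, hr]
        · rw [hf1]
          have : -((‖p - v‖⁻¹ • (p - v)) 1) / ((‖p - v‖⁻¹ • (p - v)) 0) =
              f (‖p - v‖⁻¹ • (p - v)) 0 := (hf0 _).symm
          rw [this, hval p hpv hpa, ← hr, hq1]
    · rintro ⟨u, hu, rfl⟩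
      obtain ⟨⟨p, hp, hpv, rfl⟩, hpole⟩ := hu
      have h0 := claimA _ ⟨⟨p, hp, hpv, rfl⟩, hpole⟩
      have hnv : ‖p - v‖ ≠ 0 := by simpa [sub_eq_zero] using hpv
      have hpa : p 0 ≠ a₀ := by
        intro he
        apply h0
        rw [hu0, he, sub_self, mul_zero]
      refine ⟨p, hp, hpa, hval p hpv hpa, ?_⟩
      rw [hf1, hf0]
  -- local Lipschitzness
  have hlip : LocallyLipschitzOn S f := by
    intro x hx
    have hx0 : x 0 ≠ 0 := claimA x hx
    have hcd : ContDiffAt ℝ 1 f x := by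
      have h1 : ContDiffAt ℝ 1 (fun u : Plane => u 1) x :=
        (EuclideanSpace.proj (1 : Fin 2) : Plane →L[ℝ] ℝ).contDiff.contDiffAt
      have h0 : ContDiffAt ℝ 1 (fun u : Plane => u 0) x :=
        (EuclideanSpace.proj (0 : Fin 2) : Plane →L[ℝ] ℝ).contDiff.contDiffAt
      exact ((h1.neg.div h0 hx0).smul contDiffAt_const).add contDiffAt_const
    rcases hcd.exists_lipschitzOnWith with ⟨k, t, ht, hl⟩
    exact ⟨k, t, nhdsWithin_le_nhds ht, hl⟩
  refine ⟨part1, ⟨f, hlip, part2⟩, ?_⟩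
  intro h0
  rw [part2]
  exact aux_null hlip (measure_mono_null diff_subset h0)
end
end

section
/- For any non-degenerate rectangle [a,b] × [c,d] ⊆ ℝ² (with a < b and c < d) there exists a compact set K ⊆ [a,b] × [c,d] such that the image of K under (x,y) ↦ x is the whole interval [a,b], but for every unit vector u not parallel to (1,0), the orthogonal projection of K onto the line spanned by u has one-dimensional Lebesgue measure zero. -/
open MeasureTheory Set Metric
open scoped ENNReal Real

noncomputable section

/-- The orthogonal projection of `A` onto the line spanned by `u`, as a subset of `ℝ`. -/
def orthProj (u : Plane) (A : Set Plane) : Set ℝ := (fun x => (inner ℝ x u : ℝ)) '' A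

namespace Tala
open Finset Filter Bornology
open scoped Topology



/-- decode a natural into an integer, with `|dec i| ≤ i`, surjectively. -/
def dec (i : ℕ) : ℤ := if i % 2 = 0 then (i / 2 : ℕ) else -(((i / 2 : ℕ) : ℤ) + 1)

lemma abs_dec_le (i : ℕ) : |dec i| ≤ i := by
  unfold dec; split <;> rename_i h <;> rw [abs_le] <;> constructor <;> push_cast <;> omega

lemma dec_surj (j : ℤ) : ∃ i : ℕ, dec i = j := by
  refine ⟨(if 0 ≤ j then 2*j else -2*j-1).toNat, ?_⟩
  unfold dec; split <;> rename_i h <;> split_ifs at * <;> push_cast at * <;> omega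

/-- sequence of "slopes", hitting every real infinitely often in long runs -/
def vseq (m : ℕ) : ℝ := (dec m.unpair.1 : ℝ) * (1/2)^m.unpair.2

lemma abs_vseq_le (m : ℕ) : |vseq m| ≤ m := by
  unfold vseq
  rw [abs_mul, abs_pow]
  calc |((dec m.unpair.1 : ℤ) : ℝ)| * |(1/2 : ℝ)|^m.unpair.2
      ≤ (m.unpair.1 : ℝ) * 1 := by
        apply mul_le_mul
        · rw [← Int.cast_abs]; exact_mod_cast abs_dec_le _
        · rw [abs_of_pos (by norm_num : (0:ℝ) < 1/2)]
          apply pow_le_one₀ <;> norm_num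
        · positivity
        · positivity
    _ ≤ m := by rw [mul_one]; exact_mod_cast Nat.unpair_left_le m

lemma vseq_approx (r : ℝ) (k : ℕ) : ∃ m : ℕ, k ≤ m ∧ |r - vseq m| ≤ (1/2)^k := by
  obtain ⟨i, hi⟩ := dec_surj ⌊(2:ℝ)^k * r⌋
  refine ⟨Nat.pair i k, Nat.right_le_pair i k, ?_⟩
  have hv : vseq (Nat.pair i k) = (⌊(2:ℝ)^k * r⌋ : ℝ) * (1/2)^k := by
    unfold vseq; rw [Nat.unpair_pair, hi]
  have h1 := Int.floor_le ((2:ℝ)^k * r)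
  have h2 := Int.lt_floor_add_one ((2:ℝ)^k * r)
  have hp : (0:ℝ) < 2^k := by positivity
  have e2 : ((1:ℝ)/2)^k = 1/2^k := by rw [one_div_pow]
  have hle : ((⌊(2:ℝ)^k * r⌋ : ℝ))/2^k ≤ r := (div_le_iff₀ hp).2 (by linarith)
  have hlt : r < ((⌊(2:ℝ)^k * r⌋ : ℝ))/2^k + 1/2^k := by
    rw [← add_div, lt_div_iff₀ hp]; linarith
  rw [hv, abs_le, e2]
  rw [mul_one_div]
  constructor <;> linarith

def sseq (j : ℕ) : ℝ := if j ≤ 1 then 0 else vseq (Nat.log 2 (j-1))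

lemma abs_sseq_le (j : ℕ) : |sseq j| ≤ j := by
  unfold sseq; split
  · simp
  · rename_i h
    calc |vseq (Nat.log 2 (j-1))| ≤ (Nat.log 2 (j-1) : ℝ) := abs_vseq_le _
      _ ≤ j := by exact_mod_cast le_trans (Nat.log_le_self 2 (j-1)) (by omega)

lemma sseq_block {m j : ℕ} (h1 : 2^m < j) (h2 : j ≤ 2^(m+1)) : sseq j = vseq m := by
  have hj : ¬ j ≤ 1 := by have : 1 ≤ 2^m := Nat.one_le_two_pow; omega
  have e : (2:ℕ)^(m+1) = 2^m * 2 := pow_succ 2 m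
  have h1' : 2^m ≤ j - 1 := by omega
  have h2' : j - 1 < 2^(m+1) := by omega
  unfold sseq
  rw [if_neg hj, Nat.log_eq_of_pow_le_of_lt_pow h1' h2']


def dig (n : ℕ) (x : ℝ) : ℤ := ⌊2^(n+1) * x⌋ - 2*⌊2^n * x⌋

lemma dig_mem (n : ℕ) (x : ℝ) : dig n x = 0 ∨ dig n x = 1 := by
  have h1 := Int.floor_le ((2:ℝ)^n * x)
  have h2 := Int.lt_floor_add_one ((2:ℝ)^n * x)
  have e : (2:ℝ)^(n+1) * x = 2*((2:ℝ)^n * x) := by ring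
  have l1 : 2*⌊(2:ℝ)^n * x⌋ ≤ ⌊(2:ℝ)^(n+1) * x⌋ := by
    rw [e]; exact Int.le_floor.2 (by push_cast; linarith)
  have l2 : ⌊(2:ℝ)^(n+1) * x⌋ < 2*⌊(2:ℝ)^n * x⌋ + 2 := by
    rw [e]; exact Int.floor_lt.2 (by push_cast; linarith)
  unfold dig; omega

lemma abs_dig_le (n : ℕ) (x : ℝ) : |(dig n x : ℝ)| ≤ 1 := by
  rcases dig_mem n x with h | h <;> rw [h] <;> norm_num

lemma floor_pow_eq {n N : ℕ} (hn : n ≤ N) (t : ℝ) :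
    ⌊(2:ℝ)^n * t⌋ = ⌊((⌊(2:ℝ)^N * t⌋ : ℝ)) / 2^(N-n)⌋ := by
  set y := (2:ℝ)^n * t with hy
  set k := ⌊(2:ℝ)^N * t⌋ with hk
  have eq1 : (2:ℝ)^N * t = 2^(N-n) * y := by
    rw [hy, ← mul_assoc, ← pow_add, Nat.sub_add_cancel hn]
  have hq : (0:ℝ) < 2^(N-n) := by positivity
  have hk1 : (k:ℝ) ≤ 2^(N-n) * y := by rw [← eq1]; exact Int.floor_le _
  have hk2 : 2^(N-n) * y < (k:ℝ) + 1 := by rw [← eq1]; exact Int.lt_floor_add_one _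
  set l := ⌊(k:ℝ)/2^(N-n)⌋ with hl
  have hl1 : (l:ℝ) ≤ (k:ℝ)/2^(N-n) := Int.floor_le _
  have hl2 : (k:ℝ)/2^(N-n) < (l:ℝ) + 1 := Int.lt_floor_add_one _
  have hint : (k:ℝ) < 2^(N-n) * ((l:ℝ)+1) := by
    rw [div_lt_iff₀ hq] at hl2; linarith
  have hint2 : k < (2^(N-n) : ℤ) * (l+1) := by exact_mod_cast hint
  have hint2' : k + 1 ≤ (2^(N-n) : ℤ) * (l+1) := hint2
  have hint3 : (k:ℝ) + 1 ≤ 2^(N-n) * ((l:ℝ)+1) := by exact_mod_cast hint2'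
  apply le_antisymm
  · -- ⌊y⌋ ≤ l : since y < l+1
    have hy1 : y < (l:ℝ) + 1 := by
      have : 2^(N-n) * y < 2^(N-n) * ((l:ℝ)+1) := by linarith
      exact lt_of_mul_lt_mul_left this (le_of_lt hq)
    have : ⌊y⌋ < l + 1 := Int.floor_lt.2 (by push_cast; linarith)
    omega
  · exact Int.le_floor.2 (le_trans hl1 (by rw [div_le_iff₀ hq]; linarith))


lemma dig_eq_of_floor_eq {n N : ℕ} (hn : n < N) {t t' : ℝ}
    (h : ⌊(2:ℝ)^N * t⌋ = ⌊(2:ℝ)^N * t'⌋) : dig n t = dig n t' := by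
  have hA : n + 1 ≤ N := hn
  have hB : n ≤ N := hn.le
  unfold dig
  rw [floor_pow_eq hA t, floor_pow_eq hB t, h, ← floor_pow_eq hA t', ← floor_pow_eq hB t']

lemma sum_dig_eq (x : ℝ) (N : ℕ) :
    ∑ n ∈ Finset.range N, (dig n x : ℝ) * (1/2)^(n+1) = (⌊(2:ℝ)^N * x⌋:ℝ) * (1/2)^N - (⌊x⌋:ℝ) := by
  induction N with
  | zero => simp
  | succ N ih =>
    rw [Finset.sum_range_succ, ih]
    unfold dig
    push_cast
    ring

lemma summable_dig_term (t : ℝ) : Summable (fun n => (dig n t : ℝ) * (1/2)^(n+1)) := by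
  apply Summable.of_norm_bounded (g := fun n => (1/2:ℝ) * (1/2)^n)
  · exact (summable_geometric_of_lt_one (by norm_num) (by norm_num)).mul_left _
  · intro n
    have h1 : ‖((dig n t : ℤ) : ℝ)‖ ≤ 1 := by rw [Real.norm_eq_abs]; exact abs_dig_le n t
    have h2 : ‖((1:ℝ)/2)^(n+1)‖ = (1/2) * (1/2)^n := by
      rw [norm_pow, Real.norm_eq_abs, abs_of_pos (by norm_num : (0:ℝ) < 1/2), pow_succ']
    rw [norm_mul, h2]
    have h3 : (0:ℝ) ≤ (1/2) * (1/2)^n := by positivity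
    nlinarith

lemma hasSum_dig (t : ℝ) (ht : t ∈ Ico (0:ℝ) 1) :
    HasSum (fun n => (dig n t : ℝ) * (1/2)^(n+1)) t := by
  obtain ⟨ht0, ht1⟩ := ht
  have hs := summable_dig_term t
  have hfloor : ⌊t⌋ = 0 := Int.floor_eq_zero_iff.2 ⟨ht0, ht1⟩
  have key : Tendsto (fun N => ∑ n ∈ Finset.range N, (dig n t : ℝ) * (1/2)^(n+1)) atTop (𝓝 t) := by
    have e : ∀ N, ∑ n ∈ Finset.range N, (dig n t : ℝ) * (1/2)^(n+1) = (⌊(2:ℝ)^N * t⌋:ℝ) * (1/2)^N := by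
      intro N; rw [sum_dig_eq, hfloor]; simp
    simp_rw [e]
    apply tendsto_of_tendsto_of_tendsto_of_le_of_le
      (g := fun N => t - (1/2:ℝ)^N) (h := fun _ => t)
    · have : Tendsto (fun N => ((1:ℝ)/2)^N) atTop (𝓝 0) :=
        tendsto_pow_atTop_nhds_zero_of_lt_one (by norm_num) (by norm_num)
      simpa using tendsto_const_nhds.sub this
    · exact tendsto_const_nhds
    · intro N
      show t - (1/2:ℝ)^N ≤ (⌊(2:ℝ)^N * t⌋:ℝ) * (1/2)^N
      have h2 := Int.lt_floor_add_one ((2:ℝ)^N * t)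
      have hp : (0:ℝ) < 2^N := by positivity
      have e2 : ((1:ℝ)/2)^N = 1/2^N := by rw [one_div_pow]
      rw [e2, mul_one_div]
      rw [sub_le_iff_le_add, ← add_div, le_div_iff₀ hp]
      linarith
    · intro N
      show (⌊(2:ℝ)^N * t⌋:ℝ) * (1/2)^N ≤ t
      have h1 := Int.floor_le ((2:ℝ)^N * t)
      have hp : (0:ℝ) < 2^N := by positivity
      have e2 : ((1:ℝ)/2)^N = 1/2^N := by rw [one_div_pow]
      rw [e2, mul_one_div, div_le_iff₀ hp]
      linarith
  have h2 := hs.hasSum.tendsto_sum_nat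
  have heq := tendsto_nhds_unique h2 key
  have hh := hs.hasSum
  rwa [heq] at hh


end Tala
namespace Tala

lemma nat_le_pow43 (m : ℕ) : (m : ℝ) ≤ 4 * (4/3)^m := by
  induction m with
  | zero => norm_num
  | succ m ih =>
    have h1 : (1:ℝ) ≤ (4/3)^m := one_le_pow₀ (by norm_num)
    have e : (4:ℝ) * (4/3)^(m+1) = 4*(4/3)^m + (4/3)*(4/3)^m := by ring
    push_cast
    rw [e]
    nlinarith

lemma coef_le (m : ℕ) : (m : ℝ) * (1/2)^m ≤ 4 * (2/3)^m := by
  have h := nat_le_pow43 m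
  have h2 : (0:ℝ) ≤ (1/2)^m := by positivity
  calc (m:ℝ) * (1/2)^m ≤ (4*(4/3)^m) * (1/2)^m := by nlinarith
    _ = 4 * (2/3)^m := by rw [mul_assoc, ← mul_pow]; norm_num

/-- coefficients of the projected series in direction with parameters A, B -/
def gam (A B : ℝ) (n : ℕ) : ℝ := (A - B * sseq (n+1)) * (1/2)^(n+1)

lemma gam_abs_le (A B : ℝ) (n : ℕ) : |gam A B n| ≤ (|A| + |B|) * 4 * (2/3)^(n+1) := by
  unfold gam
  rw [abs_mul, abs_pow, abs_of_pos (by norm_num : (0:ℝ) < 1/2)]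
  have h1 : |A - B * sseq (n+1)| ≤ |A| + |B| * (n+1) := by
    calc |A - B * sseq (n+1)| ≤ |A| + |B * sseq (n+1)| := abs_sub _ _
      _ ≤ |A| + |B| * (n+1) := by
          rw [abs_mul]
          have := abs_sseq_le (n+1)
          have : |B| * |sseq (n+1)| ≤ |B| * (n+1) := by
            apply mul_le_mul_of_nonneg_left _ (abs_nonneg B)
            exact_mod_cast abs_sseq_le (n+1)
          push_cast at this ⊢
          linarith
  have h2 : (0:ℝ) ≤ (1/2)^(n+1) := by positivity
  have h3 : |A| + |B| * (n+1) ≤ (|A| + |B|) * (n+1) := by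
    have : (1:ℝ) ≤ (n+1 : ℝ) := by push_cast; linarith [Nat.cast_nonneg (α := ℝ) n]
    nlinarith [abs_nonneg A, abs_nonneg B]
  calc |A - B * sseq (n+1)| * (1/2)^(n+1) ≤ ((|A| + |B|) * (n+1)) * (1/2)^(n+1) := by nlinarith
    _ = (|A| + |B|) * ((n+1 : ℕ) * (1/2)^(n+1)) := by push_cast; ring
    _ ≤ (|A| + |B|) * (4 * (2/3)^(n+1)) := by
        apply mul_le_mul_of_nonneg_left _ (by positivity)
        exact_mod_cast coef_le (n+1)
    _ = (|A| + |B|) * 4 * (2/3)^(n+1) := by ring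

lemma summable_gam_abs (A B : ℝ) : Summable (fun n => |gam A B n|) := by
  apply Summable.of_nonneg_of_le (fun n => abs_nonneg _) (fun n => gam_abs_le A B n)
  have : Summable (fun n : ℕ => ((2:ℝ)/3)^n) := summable_geometric_of_lt_one (by norm_num) (by norm_num)
  have h2 := (this.mul_left ((|A| + |B|) * 4 * (2/3)))
  apply h2.congr
  intro n
  rw [pow_succ']
  ring

lemma summable_gam_dig (A B : ℝ) (t : ℝ) : Summable (fun n => gam A B n * (dig n t : ℝ)) := by
  apply Summable.of_norm_bounded (summable_gam_abs A B)
  intro n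
  rw [norm_mul, Real.norm_eq_abs, Real.norm_eq_abs]
  have h1 := abs_dig_le n t
  have h2 := abs_nonneg (gam A B n)
  nlinarith [abs_nonneg ((dig n t : ℝ))]

/-- the constructed "function" whose graph-closure is the Talagrand set -/
def gfun (x : ℝ) : ℝ := ∑' n, gam 0 1 n * (dig n x : ℝ)

/-- the projected series -/
def Phi (A B t : ℝ) : ℝ := ∑' n, gam A B n * (dig n t : ℝ)

lemma hasSum_phi (A B : ℝ) {t : ℝ} (ht : t ∈ Ico (0:ℝ) 1) :
    HasSum (fun n => gam A B n * (dig n t : ℝ)) (A * t + B * gfun t) := by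
  have h1 : HasSum (fun n => A * ((dig n t : ℝ) * (1/2)^(n+1))) (A * t) :=
    (hasSum_dig t ht).mul_left A
  have h2 : HasSum (fun n => B * (gam 0 1 n * (dig n t : ℝ))) (B * gfun t) :=
    ((summable_gam_dig 0 1 t).hasSum).mul_left B
  have h3 := h1.add h2
  have e : (fun n => gam A B n * (dig n t : ℝ))
      = fun n => A * ((dig n t : ℝ) * (1/2)^(n+1)) + B * (gam 0 1 n * (dig n t : ℝ)) := by
    funext n
    unfold gam
    ring
  rw [e]
  exact h3

lemma phi_eq (A B : ℝ) {t : ℝ} (ht : t ∈ Ico (0:ℝ) 1) : Phi A B t = A * t + B * gfun t :=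
  (hasSum_phi A B ht).tsum_eq

/-- tail sums -/
def tailT (A B : ℝ) (N : ℕ) : ℝ := ∑' i, |gam A B (i + N)|

lemma summable_gam_abs_shift (A B : ℝ) (N : ℕ) : Summable (fun i => |gam A B (i + N)|) :=
  (summable_nat_add_iff N).2 (summable_gam_abs A B)

lemma tailT_nonneg (A B : ℝ) (N : ℕ) : 0 ≤ tailT A B N :=
  tsum_nonneg (fun i => abs_nonneg _)

lemma tailT_le (A B : ℝ) (N : ℕ) : tailT A B N ≤ 12 * (|A| + |B|) * (2/3)^N := by
  have hsum : Summable (fun i : ℕ => (|A| + |B|) * 4 * (2/3)^(N+1) * (2/3)^i) := by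
    exact (summable_geometric_of_lt_one (by norm_num) (by norm_num)).mul_left _
  have hb : ∀ i : ℕ, |gam A B (i + N)| ≤ (|A| + |B|) * 4 * (2/3)^(N+1) * (2/3)^i := by
    intro i
    calc |gam A B (i + N)| ≤ (|A| + |B|) * 4 * (2/3)^(i + N + 1) := gam_abs_le A B _
      _ = (|A| + |B|) * 4 * (2/3)^(N+1) * (2/3)^i := by
          rw [show i + N + 1 = (N+1) + i by ring, pow_add]; ring
  calc tailT A B N ≤ ∑' i, (|A| + |B|) * 4 * (2/3)^(N+1) * (2/3)^i :=
        Summable.tsum_le_tsum hb (summable_gam_abs_shift A B N) hsum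
    _ = (|A| + |B|) * 4 * (2/3)^(N+1) * (1 - 2/3)⁻¹ := by
        rw [tsum_mul_left, tsum_geometric_of_lt_one (by norm_num) (by norm_num)]
    _ ≤ 12 * (|A| + |B|) * (2/3)^N := by
        rw [pow_succ]
        have h1 : (0:ℝ) ≤ (2/3:ℝ)^N := by positivity
        nlinarith [abs_nonneg A, abs_nonneg B]

lemma phi_diff (A B : ℝ) (N : ℕ) {t t' : ℝ} (h : ⌊(2:ℝ)^N * t⌋ = ⌊(2:ℝ)^N * t'⌋) :
    |Phi A B t - Phi A B t'| ≤ tailT A B N := by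
  set f := fun n => gam A B n * ((dig n t : ℝ) - (dig n t' : ℝ)) with hf
  have hsf : Summable f := by
    have h1 := (summable_gam_dig A B t).sub (summable_gam_dig A B t')
    apply h1.congr
    intro n; simp only [hf]; ring
  have hPhi : Phi A B t - Phi A B t' = ∑' n, f n := by
    unfold Phi
    rw [← Summable.tsum_sub (summable_gam_dig A B t) (summable_gam_dig A B t')]
    congr 1; funext n; simp only [hf]; ring
  have hzero : ∀ i ∈ Finset.range N, f i = 0 := by
    intro i hi
    rw [Finset.mem_range] at hi
    simp [hf, dig_eq_of_floor_eq hi h]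
  have hsplit := Summable.sum_add_tsum_nat_add (f := f) N hsf
  rw [Finset.sum_eq_zero hzero, zero_add] at hsplit
  rw [hPhi, ← hsplit]
  have hnorm : Summable (fun i => ‖f (i + N)‖) := by
    apply Summable.of_nonneg_of_le (fun i => norm_nonneg _) _
      ((summable_gam_abs_shift A B N).mul_left 2)
    intro i
    simp only [hf, Real.norm_eq_abs, abs_mul]
    have h1 : |(dig (i+N) t : ℝ) - (dig (i+N) t' : ℝ)| ≤ 2 := by
      have ha := abs_le.1 (abs_dig_le (i+N) t)
      have hb := abs_le.1 (abs_dig_le (i+N) t')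
      rw [abs_le]
      constructor <;> [linarith [ha.1, hb.2]; linarith [ha.2, hb.1]]
    have h2 := abs_nonneg (gam A B (i+N))
    nlinarith [abs_nonneg ((dig (i+N) t : ℝ) - (dig (i+N) t' : ℝ))]
  calc |∑' i, f (i + N)| ≤ ∑' i, ‖f (i + N)‖ := by
        rw [← Real.norm_eq_abs]; exact norm_tsum_le_tsum_norm hnorm
    _ ≤ ∑' i, |gam A B (i + N)| := by
        apply Summable.tsum_le_tsum _ hnorm (summable_gam_abs_shift A B N)
        intro i
        simp only [hf, Real.norm_eq_abs, abs_mul]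
        have h1 : |(dig (i+N) t : ℝ) - (dig (i+N) t' : ℝ)| ≤ 1 := by
          rcases dig_mem (i+N) t with h' | h' <;> rcases dig_mem (i+N) t' with h'' | h'' <;>
            rw [h', h''] <;> norm_num
        nlinarith [abs_nonneg (gam A B (i+N))]
    _ = tailT A B N := rfl



set_option maxHeartbeats 1000000 in
lemma key (A B : ℝ) (hB : B ≠ 0) {δ : ℝ} (hδ : 0 < δ) :
    ∃ N : ℕ, (2:ℝ)^N * (2 * tailT A B N) < δ := by
  obtain ⟨kk, hkk⟩ := exists_pow_lt_of_lt_one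
    (show (0:ℝ) < δ/(4*(|B|+1)) by positivity) (show (1/2:ℝ) < 1 by norm_num)
  obtain ⟨N₁, hN₁⟩ := exists_pow_lt_of_lt_one
    (show (0:ℝ) < δ/(2*(24*(|A|+|B|)+1)) by positivity) (show (8/9:ℝ) < 1 by norm_num)
  set k := max kk N₁ with hk
  obtain ⟨m, hmk, hmv⟩ := vseq_approx (A/B) k
  refine ⟨2^m, ?_⟩
  set N := 2^m with hN
  have hNm : m ≤ N := le_of_lt (Nat.lt_two_pow_self (n := m))
  have hN1 : 1 ≤ N := Nat.one_le_two_pow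
  have hs : Summable (fun i => |gam A B (i + N)|) := summable_gam_abs_shift A B N
  have hsplit' : ∑ i ∈ Finset.range N, |gam A B (i + N)| + ∑' i, |gam A B (i + N + N)| = tailT A B N := by
    have h0 := Summable.sum_add_tsum_nat_add (f := fun i => |gam A B (i + N)|) N hs
    unfold tailT
    simpa using h0
  have htsum_shift : ∑' i, |gam A B (i + N + N)| = tailT A B (N + N) := by
    unfold tailT; congr 1; funext i; congr 2; ring
  have hfin : ∑ i ∈ Finset.range N, |gam A B (i + N)| ≤ |B| * (1/2)^k * (1/2)^N := by
    have hterm : ∀ i ∈ Finset.range N, |gam A B (i + N)| ≤ (|B| * (1/2)^k * (1/2)^(N+1)) * (1/2)^i := by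
      intro i hi
      rw [Finset.mem_range] at hi
      have e2 : (2:ℕ)^(m+1) = 2^m * 2 := pow_succ 2 m
      have hss : sseq (i + N + 1) = vseq m := sseq_block (by omega) (by omega)
      have e3 : gam A B (i + N) = (B * (A/B - vseq m)) * (1/2)^(i + N + 1) := by
        unfold gam; rw [hss]; field_simp
      rw [e3, abs_mul, abs_mul, abs_pow, abs_of_pos (show (0:ℝ) < 1/2 by norm_num)]
      have h1 : |A/B - vseq m| ≤ (1/2)^k := hmv
      have h2 : ((1:ℝ)/2)^(i + N + 1) = (1/2)^(N+1) * (1/2)^i := by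
        rw [show i + N + 1 = (N+1) + i by ring, pow_add]
      rw [h2]
      have h3 : (0:ℝ) ≤ (1/2:ℝ)^(N+1) * (1/2)^i := by positivity
      have h4 : (0:ℝ) ≤ |B| := abs_nonneg B
      have h5 : (0:ℝ) ≤ |A/B - vseq m| := abs_nonneg _
      have h6 : (0:ℝ) ≤ ((1:ℝ)/2)^k := by positivity
      calc |B| * |A/B - vseq m| * ((1/2:ℝ)^(N+1) * (1/2)^i)
          ≤ |B| * (1/2)^k * ((1/2:ℝ)^(N+1) * (1/2)^i) := by gcongr
        _ = (|B| * (1/2)^k * (1/2)^(N+1)) * (1/2)^i := by ring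
    calc ∑ i ∈ Finset.range N, |gam A B (i + N)|
        ≤ ∑ i ∈ Finset.range N, (|B| * (1/2)^k * (1/2)^(N+1)) * ((1:ℝ)/2)^i := Finset.sum_le_sum hterm
      _ = (|B| * (1/2)^k * (1/2)^(N+1)) * ∑ i ∈ Finset.range N, ((1:ℝ)/2)^i := by rw [Finset.mul_sum]
      _ ≤ (|B| * (1/2)^k * (1/2)^(N+1)) * 2 := by
          have hg : ∑ i ∈ Finset.range N, ((1:ℝ)/2)^i ≤ 2 := by
            have hsg : Summable (fun i : ℕ => ((1:ℝ)/2)^i) :=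
              summable_geometric_of_lt_one (by norm_num) (by norm_num)
            have hle := Summable.sum_le_tsum (Finset.range N) (fun i _ => by positivity) hsg
            rw [tsum_geometric_of_lt_one (by norm_num) (by norm_num)] at hle
            norm_num at hle
            linarith
          have hpos : (0:ℝ) ≤ |B| * (1/2)^k * (1/2)^(N+1) := by positivity
          nlinarith
      _ = |B| * (1/2)^k * (1/2)^N := by rw [pow_succ]; ring
  have htail : tailT A B (N + N) ≤ 12 * (|A|+|B|) * (2/3)^(N+N) := tailT_le A B (N+N)
  have hcomb : tailT A B N ≤ |B| * (1/2)^k * (1/2)^N + 12 * (|A|+|B|) * (2/3)^(N+N) := by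
    rw [← hsplit', htsum_shift]
    linarith
  have hpow1 : (2:ℝ)^N * (1/2)^N = 1 := by rw [← mul_pow]; norm_num
  have hpow2 : (2:ℝ)^N * (2/3)^(N+N) = (8/9)^N := by
    rw [show N + N = 2*N by ring, pow_mul, ← mul_pow]; norm_num
  have h2N : (0:ℝ) < 2^N := by positivity
  have hle1 : ((1:ℝ)/2)^k ≤ (1/2)^kk :=
    pow_le_pow_of_le_one (by norm_num) (by norm_num) (le_max_left kk N₁)
  have hle2 : ((8:ℝ)/9)^N ≤ (8/9)^N₁ :=
    pow_le_pow_of_le_one (by norm_num) (by norm_num)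
      (le_trans (le_trans (le_max_right kk N₁) hmk) hNm)
  have hB0 : (0:ℝ) ≤ |B| := abs_nonneg B
  have hterm1 : (2:ℝ)^N * (2 * (|B| * (1/2)^k * (1/2)^N)) < δ/2 := by
    have e : (2:ℝ)^N * (2 * (|B| * (1/2)^k * (1/2)^N))
        = 2 * |B| * (1/2)^k * ((2:ℝ)^N * (1/2)^N) := by ring
    rw [e, hpow1, mul_one]
    have h6 : 2 * |B| * ((1:ℝ)/2)^k ≤ 2 * |B| * (1/2)^kk :=
      mul_le_mul_of_nonneg_left hle1 (by positivity)
    have hBpos : (0:ℝ) < |B| := abs_pos.2 hB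
    have hBp1 : (0:ℝ) < |B| + 1 := by linarith
    have e2 : 2 * |B| * (δ/(4*(|B|+1))) = (|B|/(|B|+1)) * (δ/2) := by field_simp; ring
    have h7 : |B|/(|B|+1) ≤ 1 := by rw [div_le_one hBp1]; linarith
    have h8 : 2 * |B| * (δ/(4*(|B|+1))) ≤ δ/2 := by rw [e2]; nlinarith
    have h9 : 2 * |B| * ((1:ℝ)/2)^kk < 2 * |B| * (δ/(4*(|B|+1))) :=
      mul_lt_mul_of_pos_left hkk (by linarith)
    linarith
  have hterm2 : (2:ℝ)^N * (2 * (12 * (|A|+|B|) * (2/3)^(N+N))) < δ/2 := by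
    have e : (2:ℝ)^N * (2 * (12 * (|A|+|B|) * (2/3)^(N+N)))
        = 24 * (|A|+|B|) * ((2:ℝ)^N * (2/3)^(N+N)) := by ring
    rw [e, hpow2]
    have hAB0 : (0:ℝ) ≤ |A| + |B| := by positivity
    have h9 : 24 * (|A|+|B|) * (8/9:ℝ)^N ≤ 24 * (|A|+|B|) * (8/9)^N₁ :=
      mul_le_mul_of_nonneg_left hle2 (by positivity)
    have h10 : 24 * (|A|+|B|) * ((8:ℝ)/9)^N₁ < (24*(|A|+|B|)+1) * (δ/(2*(24*(|A|+|B|)+1))) := by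
      have ha := mul_lt_mul_of_pos_left hN₁ (show (0:ℝ) < 24*(|A|+|B|)+1 by positivity)
      have hb : 24 * (|A|+|B|) * ((8:ℝ)/9)^N₁ ≤ (24*(|A|+|B|)+1) * ((8:ℝ)/9)^N₁ :=
        mul_le_mul_of_nonneg_right (by linarith) (by positivity)
      linarith
    have h11 : (24*(|A|+|B|)+1) * (δ/(2*(24*(|A|+|B|)+1))) = δ/2 := by field_simp
    linarith
  have hmono : (2:ℝ)^N * (2 * tailT A B N)
      ≤ (2:ℝ)^N * (2 * (|B| * (1/2)^k * (1/2)^N))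
        + (2:ℝ)^N * (2 * (12 * (|A|+|B|) * (2/3)^(N+N))) := by
    have h12 := mul_le_mul_of_nonneg_left hcomb (show (0:ℝ) ≤ (2:ℝ)^N * 2 by positivity)
    nlinarith [h12]
  linarith


end Tala



namespace Tala

lemma gfun_abs_le (t : ℝ) : |gfun t| ≤ 8 := by
  have hnorm : Summable (fun n => ‖gam 0 1 n * (dig n t : ℝ)‖) := by
    apply Summable.of_nonneg_of_le (fun n => norm_nonneg _) _ (summable_gam_abs 0 1)
    intro n
    rw [norm_mul, Real.norm_eq_abs, Real.norm_eq_abs]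
    nlinarith [abs_dig_le n t, abs_nonneg (gam 0 1 n), abs_nonneg ((dig n t : ℝ))]
  have hsum2 : Summable (fun n : ℕ => 4 * ((2:ℝ)/3)^(n+1)) := by
    have : Summable (fun n : ℕ => ((2:ℝ)/3)^n) :=
      summable_geometric_of_lt_one (by norm_num) (by norm_num)
    apply (this.mul_left (4 * (2/3))).congr
    intro n; rw [pow_succ']; ring
  calc |gfun t| ≤ ∑' n, ‖gam 0 1 n * (dig n t : ℝ)‖ := by
        rw [← Real.norm_eq_abs]; exact norm_tsum_le_tsum_norm hnorm
    _ ≤ ∑' n, 4 * ((2:ℝ)/3)^(n+1) := by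
        apply Summable.tsum_le_tsum _ hnorm hsum2
        intro n
        calc ‖gam 0 1 n * (dig n t : ℝ)‖ ≤ |gam 0 1 n| := by
              rw [norm_mul, Real.norm_eq_abs, Real.norm_eq_abs]
              nlinarith [abs_dig_le n t, abs_nonneg (gam 0 1 n), abs_nonneg ((dig n t : ℝ))]
          _ ≤ (|(0:ℝ)| + |(1:ℝ)|) * 4 * (2/3)^(n+1) := gam_abs_le 0 1 n
          _ = 4 * ((2:ℝ)/3)^(n+1) := by norm_num
    _ = 4 * (2/3) * ∑' n : ℕ, ((2:ℝ)/3)^n := by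
        rw [← tsum_mul_left]; congr 1; funext n; rw [pow_succ']; ring
    _ = 8 := by rw [tsum_geometric_of_lt_one (by norm_num) (by norm_num)]; norm_num

end Tala

lemma pt_apply_zero (x y : ℝ) : pt x y 0 = x := by
  simp [pt]

lemma pt_apply_one (x y : ℝ) : pt x y 1 = y := by
  simp [pt]

lemma inner_pt (u : Plane) (x y : ℝ) : (inner ℝ (pt x y) u : ℝ) = x * u 0 + y * u 1 := by
  simp [pt, PiLp.inner_apply, Fin.sum_univ_two, RCLike.inner_apply]; ring

/-- (Talagrand) Any non-degenerate rectangle `[a,b] × [c,d]` contains a compact set whose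
projection to the x-axis is all of `[a,b]`, but whose orthogonal projection in every other
direction has Lebesgue measure zero. -/
theorem exists_compact_full_vertical_other_projections_null
    (a b c d : ℝ) (hab : a < b) (hcd : c < d) :
    ∃ K : Set Plane, IsCompact K ∧
      K ⊆ {p : Plane | p 0 ∈ Icc a b ∧ p 1 ∈ Icc c d} ∧
      (fun p : Plane => p 0) '' K = Icc a b ∧
      ∀ u : Plane, ‖u‖ = 1 → (¬ ∃ t : ℝ, u = t • pt 1 0) →
        volume (orthProj u K) = 0 := by
  have hba : (0:ℝ) < b - a := by linarith
  have hdc : (0:ℝ) < d - c := by linarith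
  set F : ℝ → Plane := fun x => pt x (c + (d-c) * (Tala.gfun ((x-a)/(b-a)) + 8) / 16) with hF
  set K : Set Plane := closure (F '' Icc a b) with hK
  have hymem : ∀ t : ℝ, c + (d-c) * (Tala.gfun t + 8) / 16 ∈ Icc c d := by
    intro t
    have h1 := Tala.gfun_abs_le t
    rw [abs_le] at h1
    constructor
    · nlinarith [h1.1, h1.2]
    · nlinarith [h1.1, h1.2]
  have himg_rect : F '' Icc a b ⊆ {p : Plane | p 0 ∈ Icc a b ∧ p 1 ∈ Icc c d} := by
    rintro p ⟨x, hx, rfl⟩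
    refine ⟨?_, ?_⟩
    · rw [hF]; simp only []; rw [pt_apply_zero]; exact hx
    · rw [hF]; simp only []; rw [pt_apply_one]; exact hymem _
  have hrect_closed : IsClosed {p : Plane | p 0 ∈ Icc a b ∧ p 1 ∈ Icc c d} := by
    have hc0 : Continuous (fun p : Plane => p 0) := (EuclideanSpace.proj (0 : Fin 2) (𝕜 := ℝ)).continuous
    have hc1 : Continuous (fun p : Plane => p 1) := (EuclideanSpace.proj (1 : Fin 2) (𝕜 := ℝ)).continuous
    exact (isClosed_Icc.preimage hc0).inter (isClosed_Icc.preimage hc1)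
  have hKrect : K ⊆ {p : Plane | p 0 ∈ Icc a b ∧ p 1 ∈ Icc c d} :=
    closure_minimal himg_rect hrect_closed
  have hKcompact : IsCompact K := by
    apply Bornology.IsBounded.isCompact_closure
    rw [isBounded_iff_forall_norm_le]
    refine ⟨|a| + |b| + |c| + |d|, ?_⟩
    rintro p ⟨x, hx, rfl⟩
    have h0 : F x 0 = x := pt_apply_zero _ _
    have h1y := hymem ((x-a)/(b-a))
    have h1 : F x 1 ∈ Icc c d := by rw [hF]; simp only []; rw [pt_apply_one]; exact h1y
    have hxb : |x| ≤ |a| + |b| := by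
      rw [abs_le]; constructor
      · have := neg_abs_le a; have := hx.1; linarith [abs_nonneg b]
      · have := le_abs_self b; have := hx.2; linarith [abs_nonneg a]
    have hyb : |F x 1| ≤ |c| + |d| := by
      rw [abs_le]; constructor
      · have := neg_abs_le c; have := h1.1; linarith [abs_nonneg d]
      · have := le_abs_self d; have := h1.2; linarith [abs_nonneg c]
    rw [EuclideanSpace.norm_eq, Fin.sum_univ_two, h0]
    rw [Real.norm_eq_abs, Real.norm_eq_abs]
    have : |x|^2 + |F x 1|^2 ≤ (|x| + |F x 1|)^2 := by nlinarith [abs_nonneg x, abs_nonneg (F x 1)]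
    calc √(|x|^2 + |F x 1|^2) ≤ √((|x| + |F x 1|)^2) := Real.sqrt_le_sqrt this
      _ = |x| + |F x 1| := Real.sqrt_sq (by positivity)
      _ ≤ |a| + |b| + (|c| + |d|) := by linarith
      _ = |a| + |b| + |c| + |d| := by ring
  have hproj : (fun p : Plane => p 0) '' K = Icc a b := by
    apply subset_antisymm
    · rintro y ⟨p, hp, rfl⟩
      exact (hKrect hp).1
    · intro x hx
      exact ⟨F x, subset_closure (mem_image_of_mem F hx), pt_apply_zero _ _⟩
  refine ⟨K, hKcompact, hKrect, hproj, ?_⟩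
  intro u hu hline
  have hu1 : u 1 ≠ 0 := by
    intro h0
    apply hline
    refine ⟨u 0, ?_⟩
    ext i
    fin_cases i
    · simp [pt_apply_zero]
    · simp [pt_apply_one, h0]
  set A : ℝ := u 0 * (b-a) with hA
  set B : ℝ := u 1 * (d-c) / 16 with hB
  have hBne : B ≠ 0 := by
    rw [hB]
    apply div_ne_zero _ (by norm_num)
    exact mul_ne_zero hu1 (by linarith)
  set C0 : ℝ := u 0 * a + u 1 * c + u 1 * (d-c) / 2 with hC0
  set prj : Plane → ℝ := fun p => (inner ℝ p u : ℝ) with hprj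
  have hprjF : ∀ x : ℝ, prj (F x) = C0 + (A * ((x-a)/(b-a)) + B * Tala.gfun ((x-a)/(b-a))) := by
    intro x
    rw [hprj, hF]
    simp only []
    rw [inner_pt]
    set t : ℝ := (x-a)/(b-a) with ht
    have hx' : x = a + (b-a) * t := by rw [ht]; field_simp; ring
    rw [hx', hA, hB, hC0]
    ring
  set E : Set ℝ := (fun t => C0 + Tala.Phi A B t) '' Ico (0:ℝ) 1 with hE
  have himg : prj '' (F '' Icc a b) ⊆ E ∪ {prj (F b)} := by
    rintro y ⟨p, ⟨x, hx, rfl⟩, rfl⟩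
    have ht0 : 0 ≤ (x-a)/(b-a) := div_nonneg (by linarith [hx.1]) (le_of_lt hba)
    have ht1 : (x-a)/(b-a) ≤ 1 := by
      rw [div_le_one hba]; linarith [hx.2]
    rcases lt_or_eq_of_le ht1 with hlt | heq
    · left
      refine ⟨(x-a)/(b-a), ⟨ht0, hlt⟩, ?_⟩
      show C0 + Tala.Phi A B ((x-a)/(b-a)) = prj (F x)
      rw [Tala.phi_eq A B ⟨ht0, hlt⟩]
      exact (hprjF x).symm
    · right
      have hxb : x = b := by
        have h2 : x - a = b - a := by
          have := (div_eq_one_iff_eq (ne_of_gt hba)).1 heq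
          linarith [this]
        linarith
      rw [hxb]; rfl
  have hcont : Continuous prj := Continuous.inner continuous_id continuous_const
  have hsub : orthProj u K ⊆ closure E ∪ {prj (F b)} := by
    have h1 : orthProj u K ⊆ closure (prj '' (F '' Icc a b)) := by
      rw [hK]
      exact image_closure_subset_closure_image hcont
    have h2 : closure (prj '' (F '' Icc a b)) ⊆ closure (E ∪ {prj (F b)}) :=
      closure_mono himg
    have h3 : closure (E ∪ {prj (F b)}) = closure E ∪ {prj (F b)} := by
      rw [closure_union, closure_singleton]
    intro z hz
    rw [← h3]
    exact h2 (h1 hz)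
  have hE0 : volume (closure E) = 0 := by
    refine le_antisymm ?_ (zero_le)
    apply ENNReal.le_of_forall_pos_le_add
    intro ε hε _
    rw [zero_add]
    have hεR : (0:ℝ) < (ε:ℝ) := hε
    obtain ⟨N, hN⟩ := Tala.key A B hBne hεR
    set T := Tala.tailT A B N with hT
    set w : ℕ → ℝ := fun j => C0 + Tala.Phi A B ((j:ℝ)/2^N) with hw
    set U : Set ℝ := ⋃ j ∈ Finset.range (2^N), Icc (w j - T) (w j + T) with hU
    have hUclosed : IsClosed U :=
      Set.Finite.isClosed_biUnion (Finset.range (2^N)).finite_toSet (fun _ _ => isClosed_Icc)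
    have hEU : E ⊆ U := by
      rintro y ⟨t, ⟨ht0, ht1⟩, rfl⟩
      have hp2 : (0:ℝ) < 2^N := by positivity
      have hfl0 : 0 ≤ ⌊(2:ℝ)^N * t⌋ := Int.floor_nonneg.2 (by positivity)
      have hflN : ⌊(2:ℝ)^N * t⌋ < 2^N := by
        apply Int.floor_lt.2
        push_cast
        nlinarith
      set j : ℕ := (⌊(2:ℝ)^N * t⌋).toNat with hj
      have hjc : (j:ℤ) = ⌊(2:ℝ)^N * t⌋ := Int.toNat_of_nonneg hfl0
      have hjm : j ∈ Finset.range (2^N) := by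
        rw [Finset.mem_range]
        have : (j:ℤ) < (2^N : ℤ) := by rw [hjc]; exact_mod_cast hflN
        exact_mod_cast this
      have hfl' : ⌊(2:ℝ)^N * ((j:ℝ)/2^N)⌋ = ⌊(2:ℝ)^N * t⌋ := by
        rw [mul_div_cancel₀ _ (ne_of_gt hp2)]
        rw [Int.floor_natCast]
        exact_mod_cast hjc
      have hd := Tala.phi_diff A B N (hfl'.symm : ⌊(2:ℝ)^N * t⌋ = ⌊(2:ℝ)^N * ((j:ℝ)/2^N)⌋)
      rw [abs_le] at hd
      apply Set.mem_biUnion hjm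
      rw [Set.mem_Icc, hw]
      constructor
      · simp only []; linarith [hd.1]
      · simp only []; linarith [hd.2]
    have hcover : closure E ⊆ U := closure_minimal hEU hUclosed
    have hTnn : 0 ≤ T := Tala.tailT_nonneg A B N
    calc volume (closure E) ≤ volume U := measure_mono hcover
      _ ≤ ∑ j ∈ Finset.range (2^N), volume (Icc (w j - T) (w j + T)) :=
          measure_biUnion_finset_le _ _
      _ = ∑ _j ∈ Finset.range (2^N), ENNReal.ofReal (2*T) := by
          apply Finset.sum_congr rfl
          intro j _
          rw [Real.volume_Icc]
          congr 1
          ring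
      _ = (2^N : ℕ) * ENNReal.ofReal (2*T) := by
          rw [Finset.sum_const, Finset.card_range, nsmul_eq_mul]
      _ = ENNReal.ofReal ((2:ℝ)^N) * ENNReal.ofReal (2*T) := by
          congr 1
          rw [ENNReal.ofReal_pow (by norm_num : (0:ℝ) ≤ 2)]
          push_cast
          congr 1
          exact (ENNReal.ofReal_ofNat 2).symm
      _ = ENNReal.ofReal ((2:ℝ)^N * (2*T)) := by
          rw [ENNReal.ofReal_mul (by positivity : (0:ℝ) ≤ (2:ℝ)^N)]
      _ ≤ (ε : ℝ≥0∞) := by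
          calc ENNReal.ofReal ((2:ℝ)^N * (2*T)) ≤ ENNReal.ofReal (ε:ℝ) :=
                ENNReal.ofReal_le_ofReal (le_of_lt hN)
            _ = (ε : ℝ≥0∞) := ENNReal.ofReal_coe_nnreal
  refine le_antisymm ?_ (zero_le)
  calc volume (orthProj u K) ≤ volume (closure E ∪ {prj (F b)}) := measure_mono hsub
    _ ≤ volume (closure E) + volume {prj (F b)} := measure_union_le _ _
    _ = 0 := by rw [hE0, measure_singleton, add_zero]
end
end

section
/- Let A ⊆ ℝ² be compact. Then the function f_A : [0,π] → ℝ defined by f_A(φ) = λ(pr_φ(A)), where pr_φ(A) is the orthogonal projection of A onto the line spanned by the unit vector (cos φ, sin φ), is upper semicontinuous. -/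
open MeasureTheory Set Metric
open scoped ENNReal Real

noncomputable section

lemma continuous_pt : Continuous fun φ : ℝ => pt (Real.cos φ) (Real.sin φ) := by
  apply (PiLp.continuous_toLp (p := 2) (β := fun _ : Fin 2 => ℝ)).comp
  refine continuous_pi fun i => ?_
  fin_cases i <;> simp <;> fun_prop

/-- For a compact `A ⊆ ℝ²`, the function `φ ↦ λ(pr_φ(A))`, giving the Lebesgue measure of the
orthogonal projection of `A` onto the line spanned by `(cos φ, sin φ)`, is upper semicontinuous
on `[0, π]`. -/
theorem measure_projection_upperSemicontinuous (A : Set Plane) (hA : IsCompact A) :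
    UpperSemicontinuousOn
      (fun φ : ℝ => (volume (orthProj (pt (Real.cos φ) (Real.sin φ)) A)).toReal)
      (Icc 0 π) := by
  intro φ₀ hφ₀ y hy
  set u : ℝ → Plane := fun φ => pt (Real.cos φ) (Real.sin φ) with hu
  -- the projection onto the fixed direction is compact
  have hS : ∀ φ, IsCompact (orthProj (u φ) A) := fun φ =>
    hA.image (continuous_id.inner continuous_const)
  set S₀ : Set ℝ := orthProj (u φ₀) A with hS₀
  -- A is bounded
  obtain ⟨R, hR0, hRA⟩ : ∃ R > 0, A ⊆ closedBall 0 R := by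
    obtain ⟨R, hR⟩ := hA.isBounded.subset_closedBall 0
    exact ⟨max R 1, lt_of_lt_of_le one_pos (le_max_right _ _),
      hR.trans (closedBall_subset_closedBall (le_max_left _ _))⟩
  -- thickenings of S₀ are compact hence of finite measure
  have hfin : ∀ δ : ℝ, volume (cthickening δ S₀) ≠ ∞ := fun δ =>
    ((hS φ₀).cthickening).measure_lt_top.ne
  -- the measure of the thickening tends to the measure of S₀
  have htend := tendsto_measure_cthickening_of_isClosed (μ := volume) (s := S₀)
    ⟨1, one_pos, hfin 1⟩ (hS φ₀).isClosed
  have hylt : volume S₀ < ENNReal.ofReal y := by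
    rw [← ENNReal.ofReal_toReal ((hS φ₀).measure_lt_top.ne)]
    exact ENNReal.ofReal_lt_ofReal_iff_of_nonneg ENNReal.toReal_nonneg |>.mpr hy
  obtain ⟨δ, hδpos, hδ⟩ : ∃ δ > 0, volume (cthickening δ S₀) < ENNReal.ofReal y := by
    have h2 := htend.eventually (gt_mem_nhds hylt)
    rcases Metric.eventually_nhds_iff.mp h2 with ⟨ε, εpos, hε⟩
    exact ⟨ε / 2, by positivity, hε (by rw [Real.dist_eq, sub_zero, abs_of_pos (by positivity)]; linarith)⟩
  -- eventually the direction is within δ/R of u φ₀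
  have hcont : Filter.Tendsto u (nhds φ₀) (nhds (u φ₀)) := continuous_pt.tendsto φ₀
  have hev : ∀ᶠ φ in nhds φ₀, dist (u φ) (u φ₀) < δ / R :=
    hcont (ball_mem_nhds _ (div_pos hδpos hR0))
  refine Filter.Eventually.filter_mono nhdsWithin_le_nhds ?_
  filter_upwards [hev] with φ hφ
  -- the projection at φ lies in the δ-cthickening of S₀
  have hsub : orthProj (u φ) A ⊆ cthickening δ S₀ := by
    rintro _ ⟨x, hx, rfl⟩
    refine mem_cthickening_of_dist_le _ ((inner ℝ x (u φ₀) : ℝ)) δ S₀ ⟨x, hx, rfl⟩ ?_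
    have : dist (inner ℝ x (u φ) : ℝ) (inner ℝ x (u φ₀) : ℝ) = |(inner ℝ x (u φ - u φ₀) : ℝ)| := by
      rw [Real.dist_eq, inner_sub_right]
    rw [this]
    calc |(inner ℝ x (u φ - u φ₀) : ℝ)| ≤ ‖x‖ * ‖u φ - u φ₀‖ := abs_real_inner_le_norm _ _
      _ ≤ R * (δ / R) := by
          apply mul_le_mul _ _ (norm_nonneg _) hR0.le
          · simpa using mem_closedBall_zero_iff.mp (hRA hx)
          · rw [← dist_eq_norm]; exact hφ.le
      _ = δ := by field_simp
  calc (volume (orthProj (u φ) A)).toReal ≤ (volume (cthickening δ S₀)).toReal :=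
        ENNReal.toReal_mono (hfin δ) (measure_mono hsub)
    _ < y := ENNReal.toReal_lt_of_lt_ofReal hδ
end
end

section
/- Let A ⊆ ℝ² be compact. Then the function F_A : ℝ² ∖ A → ℝ defined by F_A(v) = λ(P_v(A)) is upper semicontinuous on ℝ² ∖ A. -/
open MeasureTheory Set Metric
open scoped ENNReal Real

noncomputable section

/-- The circle in `ℂ` has finite one-dimensional Hausdorff measure. -/
lemma hausdorff_sphere_complex_ne_top : μH[1] (sphere (0 : ℂ) 1) ≠ ∞ := by
  have h1 : sphere (0 : ℂ) 1 = circleMap 0 1 '' Ioc 0 (2 * π) := by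
    rw [image_circleMap_Ioc, abs_one]
  have h2 := (lipschitzWith_circleMap (0 : ℂ) 1).hausdorffMeasure_image_le
    zero_le_one (Ioc 0 (2 * π))
  rw [h1]
  rw [hausdorffMeasure_real, Real.volume_Ioc] at h2
  exact ne_top_of_le_ne_top (ENNReal.mul_ne_top
    (ENNReal.rpow_ne_top_of_nonneg zero_le_one ENNReal.coe_ne_top)
    ENNReal.ofReal_ne_top) h2

/-- The circle in the plane has finite one-dimensional Hausdorff measure. -/
lemma hausdorff_sphere_ne_top : μH[1] (sphere (0 : Plane) 1) ≠ ∞ := by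
  let e : ℂ ≃ₗᵢ[ℝ] Plane := Complex.isometryOfOrthonormal (EuclideanSpace.basisFun (Fin 2) ℝ)
  have h : sphere (0 : Plane) 1 = e '' sphere (0 : ℂ) 1 := by
    rw [e.image_sphere, map_zero]
  rw [h, e.isometry.hausdorffMeasure_image (Or.inl zero_le_one)]
  exact hausdorff_sphere_complex_ne_top

/-- Quantitative continuity of normalization: `‖a/‖a‖ - b/‖b‖‖ ≤ 2‖a - b‖/‖a‖`. -/
lemma norm_normalize_sub_normalize_le {E : Type*} [NormedAddCommGroup E] [NormedSpace ℝ E]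
    {a b : E} (ha : a ≠ 0) (hb : b ≠ 0) :
    ‖‖a‖⁻¹ • a - ‖b‖⁻¹ • b‖ ≤ 2 * ‖a - b‖ / ‖a‖ := by
  have hna : (0 : ℝ) < ‖a‖ := norm_pos_iff.2 ha
  have hnb : (0 : ℝ) < ‖b‖ := norm_pos_iff.2 hb
  have key : ‖a‖⁻¹ • a - ‖b‖⁻¹ • b = ‖a‖⁻¹ • (a - b) + (‖a‖⁻¹ - ‖b‖⁻¹) • b := by
    rw [smul_sub, sub_smul]; abel
  have h2 : |‖a‖⁻¹ - ‖b‖⁻¹| * ‖b‖ ≤ ‖a - b‖ / ‖a‖ := by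
    have e1 : ‖a‖⁻¹ - ‖b‖⁻¹ = (‖b‖ - ‖a‖) / (‖a‖ * ‖b‖) := by field_simp
    have e2 : |‖b‖ - ‖a‖| ≤ ‖a - b‖ := by
      rw [abs_sub_comm]; exact abs_norm_sub_norm_le a b
    rw [e1, abs_div, abs_of_pos (mul_pos hna hnb)]
    calc |‖b‖ - ‖a‖| / (‖a‖ * ‖b‖) * ‖b‖ = |‖b‖ - ‖a‖| / ‖a‖ := by field_simp
      _ ≤ ‖a - b‖ / ‖a‖ := by gcongr
  rw [key]
  calc ‖‖a‖⁻¹ • (a - b) + (‖a‖⁻¹ - ‖b‖⁻¹) • b‖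
      ≤ ‖‖a‖⁻¹ • (a - b)‖ + ‖(‖a‖⁻¹ - ‖b‖⁻¹) • b‖ := norm_add_le _ _
    _ = ‖a‖⁻¹ * ‖a - b‖ + |‖a‖⁻¹ - ‖b‖⁻¹| * ‖b‖ := by
        rw [norm_smul, norm_smul, Real.norm_eq_abs, Real.norm_eq_abs,
          abs_of_nonneg (inv_nonneg.2 hna.le)]
    _ ≤ ‖a - b‖ / ‖a‖ + ‖a - b‖ / ‖a‖ :=
        add_le_add (le_of_eq (inv_mul_eq_div _ _)) h2
    _ = 2 * ‖a - b‖ / ‖a‖ := by ring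

/-- For a compact `A ⊆ ℝ²`, the function `v ↦ λ(P_v(A))`, giving the (arc-length, i.e.
1-dimensional Hausdorff) measure of the radial projection of `A` from `v`, is upper
semicontinuous on `ℝ² ∖ A`. -/
theorem measure_radialProj_upperSemicontinuous (A : Set Plane) (hA : IsCompact A) :
    UpperSemicontinuousOn (fun v : Plane => (μH[1] (radialProj v A)).toReal) Aᶜ := by
  intro v hv y hy
  rcases eq_empty_or_nonempty A with rfl | hA0
  · have : ∀ w : Plane, radialProj w (∅ : Set Plane) = ∅ := by
      intro w; ext z; simp [radialProj]
    simp only [this, measure_empty, ENNReal.toReal_zero] at hy ⊢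
    exact Filter.Eventually.of_forall fun _ => hy
  -- the base point is at positive distance from A
  have hvA : v ∉ A := hv
  have hr : 0 < infDist v A := (hA.isClosed.notMem_iff_infDist_pos hA0).1 hvA
  set r : ℝ := infDist v A with hr_def
  -- description of the radial projection as an image
  have himg : ∀ w : Plane, w ∉ A →
      radialProj w A = (fun x => ‖x - w‖⁻¹ • (x - w)) '' A := by
    intro w hw
    ext z
    constructor
    · rintro ⟨x, hx, -, rfl⟩; exact ⟨x, hx, rfl⟩
    · rintro ⟨x, hx, rfl⟩; exact ⟨x, hx, fun h => hw (h ▸ hx), rfl⟩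
  set K : Set Plane := radialProj v A with hK_def
  -- K is compact
  have hKc : IsCompact K := by
    rw [hK_def, himg v hvA]
    apply hA.image_of_continuousOn
    apply ContinuousOn.fun_smul
    · apply ContinuousOn.inv₀
      · exact (continuous_id.sub continuous_const).norm.continuousOn
      · intro x hx
        simp only [ne_eq, norm_eq_zero, sub_eq_zero]
        exact fun h => hvA (h ▸ hx)
    · exact (continuous_id.sub continuous_const).continuousOn
  -- projections land on the unit sphere
  have hsub : ∀ w : Plane, w ∉ A → radialProj w A ⊆ sphere (0 : Plane) 1 := by
    intro w hw z hz
    obtain ⟨x, hx, hxw, rfl⟩ := hz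
    have hxw' : x - w ≠ 0 := sub_ne_zero.2 hxw
    simp only [mem_sphere_iff_norm, sub_zero, norm_smul, norm_inv, norm_norm]
    rw [inv_mul_cancel₀ (norm_ne_zero_iff.2 hxw')]
  have hKs : K ⊆ sphere (0 : Plane) 1 := hsub v hvA
  -- finiteness of the measure of K
  have hKfin : μH[1] K ≠ ∞ :=
    ne_top_of_le_ne_top hausdorff_sphere_ne_top (measure_mono hKs)
  have hKy : μH[1] K < ENNReal.ofReal y :=
    (ENNReal.lt_ofReal_iff_toReal_lt hKfin).2 hy
  -- measure restricted to the sphere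
  set μ : Measure Plane := (μH[1] : Measure Plane).restrict (sphere (0 : Plane) 1) with hμ_def
  have hsphM : MeasurableSet (sphere (0 : Plane) 1) :=
    (isClosed_sphere).measurableSet
  have hμK : μ (closure K) = μH[1] K := by
    rw [hKc.isClosed.closure_eq, hμ_def, Measure.restrict_apply' hsphM,
      inter_eq_self_of_subset_left hKs]
  have htend : Filter.Tendsto (fun ε => μ (cthickening ε K)) (nhds 0) (nhds (μH[1] K)) := by
    rw [← hμK]
    apply tendsto_measure_cthickening
    refine ⟨1, one_pos, ?_⟩
    rw [hμ_def, Measure.restrict_apply' hsphM]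
    exact ne_top_of_le_ne_top hausdorff_sphere_ne_top (measure_mono inter_subset_right)
  -- choose a positive ε with small thickened measure
  have hev : ∀ᶠ ε in nhdsWithin (0 : ℝ) (Ioi 0),
      μ (cthickening ε K) < ENNReal.ofReal y :=
    (htend.eventually (gt_mem_nhds hKy)).filter_mono nhdsWithin_le_nhds
  obtain ⟨ε, hεm, hεpos⟩ := (hev.and (eventually_mem_nhdsWithin)).exists
  rw [mem_Ioi] at hεpos
  -- neighborhood radius
  set δ : ℝ := ε * r / 2 with hδ_def
  have hδpos : 0 < δ := by positivity
  -- eventual estimate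
  have hball : ∀ᶠ w in nhdsWithin v Aᶜ, w ∈ ball v δ :=
    Filter.eventually_inf_principal.2 <|
      Filter.eventually_of_mem (ball_mem_nhds v hδpos) fun w hw _ => hw
  filter_upwards [hball, self_mem_nhdsWithin] with w hwball hwA
  -- radialProj w A ⊆ sphere ∩ cthickening ε K
  have hwsub : radialProj w A ⊆ cthickening ε K ∩ sphere (0 : Plane) 1 := by
    intro z hz
    refine ⟨?_, hsub w hwA hz⟩
    obtain ⟨x, hx, hxw, rfl⟩ := hz
    have hxv : x ≠ v := fun h => hvA (h ▸ hx)
    have ha : x - v ≠ 0 := sub_ne_zero.2 hxv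
    have hb : x - w ≠ 0 := sub_ne_zero.2 hxw
    have hrx : r ≤ ‖x - v‖ := by
      rw [← dist_eq_norm, dist_comm]
      exact infDist_le_dist_of_mem hx
    have hd : ‖‖x - v‖⁻¹ • (x - v) - ‖x - w‖⁻¹ • (x - w)‖ ≤ 2 * ‖(x - v) - (x - w)‖ / ‖x - v‖ :=
      norm_normalize_sub_normalize_le ha hb
    have hvw : ‖(x - v) - (x - w)‖ = ‖w - v‖ := by
      congr 1; abel
    have hwv : ‖w - v‖ < δ := by
      rw [← dist_eq_norm]; exact hwball
    have hbound : 2 * ‖(x - v) - (x - w)‖ / ‖x - v‖ ≤ ε := by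
      rw [hvw, div_le_iff₀ (lt_of_lt_of_le hr hrx)]
      calc 2 * ‖w - v‖ ≤ 2 * δ := by linarith [hwv]
        _ = ε * r := by rw [hδ_def]; try ring
        _ ≤ ε * ‖x - v‖ := by gcongr
    apply mem_cthickening_of_dist_le _ (‖x - v‖⁻¹ • (x - v)) ε K
      ⟨x, hx, hxv, rfl⟩
    rw [dist_eq_norm]
    calc ‖‖x - w‖⁻¹ • (x - w) - ‖x - v‖⁻¹ • (x - v)‖
        = ‖‖x - v‖⁻¹ • (x - v) - ‖x - w‖⁻¹ • (x - w)‖ := norm_sub_rev _ _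
      _ ≤ 2 * ‖(x - v) - (x - w)‖ / ‖x - v‖ := hd
      _ ≤ ε := hbound
  -- conclude
  have : μH[1] (radialProj w A) ≤ μ (cthickening ε K) := by
    rw [hμ_def, Measure.restrict_apply' hsphM]
    exact measure_mono hwsub
  exact ENNReal.toReal_lt_of_lt_ofReal (lt_of_le_of_lt this hεm)
end
end

section
/- Let K ⊆ ℝ² be a compact set which is invisible from every point of the plane and whose orthogonal projection onto the line spanned by any unit vector not parallel to (1,0) has one-dimensional Lebesgue measure zero. Let ℒ(K) be the dual family of K and L(K) = ⋃ℒ(K). Then L(K) has two-dimensional Lebesgue measure zero, and for every line e ⊆ ℝ² with e ∉ ℒ(K), the intersection e ∩ L(K) has one-dimensional Hausdorff measure zero. -/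
open MeasureTheory Set Metric
open scoped ENNReal Real

noncomputable section

/-- A line in `ℝ²`. -/
def IsLine (e : Set Plane) : Prop :=
  ∃ p u : Plane, u ≠ 0 ∧ e = {q | ∃ t : ℝ, q = p + t • u}

@[simp] lemma pt_apply0 (a b : ℝ) : pt a b 0 = a := rfl
@[simp] lemma pt_apply1 (a b : ℝ) : pt a b 1 = b := rfl
lemma pt_eta (q : Plane) : pt (q 0) (q 1) = q := by ext i; fin_cases i <;> rfl
lemma inner_two (x u : Plane) : (inner ℝ x u : ℝ) = x 0 * u 0 + x 1 * u 1 := by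
  simp [PiLp.inner_apply, RCLike.inner_apply, Fin.sum_univ_two, mul_comm]
lemma norm_two (x : Plane) : ‖x‖ = Real.sqrt (x 0 ^ 2 + x 1 ^ 2) := by
  rw [EuclideanSpace.norm_eq, Fin.sum_univ_two]; simp [sq_abs]

lemma mem_dualUnion {K : Set Plane} {q : Plane} :
    q ∈ dualUnion K ↔ ∃ p ∈ K, q 1 = p 0 * q 0 + p 1 := by
  constructor
  · rintro ⟨e, ⟨p, hp, rfl⟩, hq⟩; exact ⟨p, hp, hq⟩
  · rintro ⟨p, hp, hq⟩; exact ⟨lineAB (p 0) (p 1), ⟨p, hp, rfl⟩, hq⟩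

/-- mul by constant is Lipschitz on ℝ -/
lemma lip_mul (r : ℝ) : LipschitzWith (Real.toNNReal |r|) (fun y : ℝ => r * y) := by
  apply LipschitzWith.of_dist_le_mul
  intro x y
  rw [Real.dist_eq, Real.dist_eq, ← mul_sub, abs_mul, Real.coe_toNNReal _ (abs_nonneg r)]

/-- The vertical slice of the dual union is a null set. -/
lemma slice_null {K : Set Plane}
    (hproj : ∀ u : Plane, ‖u‖ = 1 → (¬ ∃ t : ℝ, u = t • pt 1 0) →
      volume (orthProj u K) = 0) (x : ℝ) :
    volume ((fun p : Plane => p 0 * x + p 1) '' K) = 0 := by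
  set r : ℝ := Real.sqrt (x ^ 2 + 1) with hr
  have hrpos : 0 < r := Real.sqrt_pos.2 (by positivity)
  set u : Plane := pt (x / r) (1 / r) with hu
  have hnorm : ‖u‖ = 1 := by
    rw [norm_two]
    simp only [hu, pt_apply0, pt_apply1, div_pow, one_pow]
    rw [← add_div, Real.sqrt_div' _ (by positivity)]
    rw [hr, Real.sq_sqrt (by positivity)]
    exact div_self hrpos.ne' 
  have hnp : ¬ ∃ t : ℝ, u = t • pt 1 0 := by
    rintro ⟨t, ht⟩
    have : u 1 = t * (0:ℝ) := by rw [ht]; rfl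
    simp only [hu, pt_apply1, mul_zero] at this
    exact (one_div_ne_zero hrpos.ne') this
  have h0 := hproj u hnorm hnp
  have himg : (fun p : Plane => p 0 * x + p 1) '' K
      = (fun y : ℝ => r * y) '' orthProj u K := by
    rw [orthProj, image_image]
    apply image_congr
    intro p _
    rw [inner_two]
    simp only [hu, pt_apply0, pt_apply1]
    field_simp
  rw [himg]
  rw [← MeasureTheory.hausdorffMeasure_real] at h0 ⊢
  have hle := (lip_mul r).hausdorffMeasure_image_le zero_le_one (orthProj u K)
  rw [h0, mul_zero] at hle
  exact le_zero_iff.mp hle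

lemma continuous_coord (i : Fin 2) : Continuous (fun p : Plane => p i) :=
  (continuous_apply i).comp (PiLp.continuous_ofLp 2 fun _ : Fin 2 => ℝ)

lemma continuous_pt2 : Continuous (fun ab : ℝ × ℝ => pt ab.1 ab.2) := by
  apply (PiLp.continuous_toLp 2 fun _ : Fin 2 => ℝ).comp
  apply continuous_pi
  intro i
  fin_cases i
  · simpa using continuous_fst
  · simpa using continuous_snd

lemma dualUnion_meas {K : Set Plane} (hK : IsCompact K) : MeasurableSet (dualUnion K) := by
  have hF : Continuous (fun pr : Plane × ℝ => pt pr.2 ((pr.1) 0 * pr.2 + (pr.1) 1)) := by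
    show Continuous ((fun ab : ℝ × ℝ => pt ab.1 ab.2) ∘
      (fun pr : Plane × ℝ => (pr.2, (pr.1) 0 * pr.2 + (pr.1) 1)))
    apply continuous_pt2.comp
    exact (continuous_snd.prodMk
      ((((continuous_coord 0).comp continuous_fst).mul continuous_snd).add
        ((continuous_coord 1).comp continuous_fst)))
  have key : dualUnion K = ⋃ n : ℕ,
      (fun pr : Plane × ℝ => pt pr.2 ((pr.1) 0 * pr.2 + (pr.1) 1)) '' (K ×ˢ Icc (-(n:ℝ)) n) := by
    ext q
    simp only [mem_iUnion, mem_image, mem_dualUnion, Set.mem_prod, Set.mem_Icc, Prod.exists]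
    constructor
    · rintro ⟨p, hp, hq⟩
      obtain ⟨n, hn⟩ := exists_nat_ge |q 0|
      refine ⟨n, p, q 0, ⟨hp, ?_, ?_⟩, ?_⟩
      · linarith [neg_abs_le (q 0)]
      · linarith [le_abs_self (q 0)]
      · rw [← hq, pt_eta]
    · rintro ⟨n, p, x, ⟨hp, _, _⟩, rfl⟩
      exact ⟨p, hp, by simp⟩
  rw [key]
  exact MeasurableSet.iUnion fun n =>
    ((hK.prod isCompact_Icc).image hF).measurableSet

def eqv : Plane ≃ᵐ ℝ × ℝ :=
  (MeasurableEquiv.toLp 2 (Fin 2 → ℝ)).symm.trans (MeasurableEquiv.finTwoArrow)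

lemma eqv_symm_apply0 (z : ℝ × ℝ) : eqv.symm z 0 = z.1 := rfl
lemma eqv_symm_apply1 (z : ℝ × ℝ) : eqv.symm z 1 = z.2 := rfl

lemma part1 {K : Set Plane} (hK : IsCompact K)
    (hproj : ∀ u : Plane, ‖u‖ = 1 → (¬ ∃ t : ℝ, u = t • pt 1 0) →
      volume (orthProj u K) = 0) : volume (dualUnion K) = 0 := by
  have hmeas := dualUnion_meas hK
  have mp : MeasurePreserving eqv volume volume :=
    (volume_preserving_finTwoArrow ℝ).comp (EuclideanSpace.volume_preserving_symm_measurableEquiv_toLp (Fin 2))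
  set T : Set (ℝ × ℝ) := eqv.symm ⁻¹' (dualUnion K) with hT
  have hTmeas : MeasurableSet T := eqv.symm.measurable hmeas
  have hS : dualUnion K = eqv ⁻¹' T := by
    ext q; simp [hT]
  have hT0 : volume T = 0 := by
    rw [Measure.volume_eq_prod, Measure.measure_prod_null hTmeas]
    refine Filter.Eventually.of_forall fun x => ?_
    refine measure_mono_null ?_ (slice_null hproj x)
    intro y hy
    obtain ⟨p, hp, hq⟩ := mem_dualUnion.1 hy
    rw [eqv_symm_apply0, eqv_symm_apply1] at hq
    exact ⟨p, hp, hq.symm⟩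
  rw [hS, mp.measure_preimage hTmeas.nullMeasurableSet, hT0]


lemma coord_le_dist (x y : Plane) (i : Fin 2) : dist (x i) (y i) ≤ dist x y := by
  rw [EuclideanSpace.dist_eq, ← Real.sqrt_sq (dist_nonneg (x := x i) (y := y i))]
  exact Real.sqrt_le_sqrt (Finset.single_le_sum (f := fun j => dist (x j) (y j) ^ 2)
    (fun j _ => sq_nonneg _) (Finset.mem_univ i))

lemma abs_coord_le_norm (x : Plane) (i : Fin 2) : |x i| ≤ ‖x‖ := by
  have := coord_le_dist x 0 i
  simpa [Real.dist_eq] using this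

lemma dist_two (x y : Plane) : dist x y = Real.sqrt ((x 0 - y 0) ^ 2 + (x 1 - y 1) ^ 2) := by
  rw [EuclideanSpace.dist_eq, Fin.sum_univ_two]
  simp [Real.dist_eq, sq_abs]

lemma isometry_vert (a : ℝ) : Isometry (fun y : ℝ => pt a y) := by
  apply Isometry.of_dist_eq
  intro y z
  rw [dist_two]
  simp [Real.dist_eq, Real.sqrt_sq_eq_abs]

lemma lip_graph (a b : ℝ) :
    LipschitzWith (Real.toNNReal (Real.sqrt (1 + a ^ 2))) (fun x : ℝ => pt x (a * x + b)) := by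
  apply LipschitzWith.of_dist_le_mul
  intro x y
  rw [dist_two]
  simp only [pt_apply0, pt_apply1]
  have h : (x - y) ^ 2 + (a * x + b - (a * y + b)) ^ 2 = (1 + a ^ 2) * (x - y) ^ 2 := by ring
  rw [h, Real.sqrt_mul (by positivity), Real.sqrt_sq_eq_abs,
    Real.coe_toNNReal _ (Real.sqrt_nonneg _), Real.dist_eq]

def Aset (n : ℕ) : Set Plane := {w | ((n : ℝ) + 1)⁻¹ ≤ |w 0| ∧ |w 0| ≤ 2 ∧ |w 1| ≤ 2}

lemma lip_h (n : ℕ) :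
    LipschitzOnWith (Real.toNNReal (4 * ((n : ℝ) + 1) ^ 2))
      (fun w : Plane => -(w 1) / (w 0)) (Aset n) := by
  rw [lipschitzOnWith_iff_dist_le_mul]
  rintro w ⟨h1, h2, h3⟩ w' ⟨h1', h2', h3'⟩
  set c : ℝ := (n : ℝ) + 1 with hc
  have hcpos : (0:ℝ) < c := by positivity
  have hw0 : (0:ℝ) < |w 0| := lt_of_lt_of_le (by positivity) h1
  have hw0' : (0:ℝ) < |w' 0| := lt_of_lt_of_le (by positivity) h1'
  have e0 : |w 0 - w' 0| ≤ dist w w' := by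
    have := coord_le_dist w w' 0; rwa [Real.dist_eq] at this
  have e1 : |w 1 - w' 1| ≤ dist w w' := by
    have := coord_le_dist w w' 1; rwa [Real.dist_eq] at this
  have key : -(w 1) / (w 0) - -(w' 1) / (w' 0) = (w' 1 * w 0 - w 1 * w' 0) / (w 0 * w' 0) := by
    field_simp [abs_pos.mp hw0, abs_pos.mp hw0']
    ring
  rw [Real.dist_eq, key, abs_div, abs_mul]
  have hnum : |w' 1 * w 0 - w 1 * w' 0| ≤ 4 * dist w w' := by
    have hsplit : w' 1 * w 0 - w 1 * w' 0 = w' 1 * (w 0 - w' 0) + w' 0 * (w' 1 - w 1) := by ring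
    calc |w' 1 * w 0 - w 1 * w' 0|
        ≤ |w' 1| * |w 0 - w' 0| + |w' 0| * |w' 1 - w 1| := by
          rw [hsplit]; exact (abs_add_le _ _).trans (by rw [abs_mul, abs_mul])
      _ ≤ 2 * dist w w' + 2 * dist w w' := by
          rw [abs_sub_comm (w' 1) (w 1)]
          gcongr
      _ = 4 * dist w w' := by ring
  have hden : c⁻¹ * c⁻¹ ≤ |w 0| * |w' 0| :=
    mul_le_mul h1 h1' (by positivity) (abs_nonneg _)
  calc |w' 1 * w 0 - w 1 * w' 0| / (|w 0| * |w' 0|)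
      ≤ (4 * dist w w') / (c⁻¹ * c⁻¹) :=
        div_le_div₀ (by positivity) hnum (by positivity) hden
    _ = (4 * c ^ 2) * dist w w' := by field_simp
    _ = Real.toNNReal (4 * c ^ 2) * dist w w' := by
        rw [Real.coe_toNNReal _ (by positivity)]

lemma part2 {K : Set Plane}
    (hinv : ∀ v : Plane, μH[1] (radialProj v K) = 0)
    (hproj : ∀ u : Plane, ‖u‖ = 1 → (¬ ∃ t : ℝ, u = t • pt 1 0) →
      volume (orthProj u K) = 0) :
    ∀ e : Set Plane, IsLine e → e ∉ dualLines K → μH[1] (e ∩ dualUnion K) = 0 := by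
  rintro e ⟨p, u, hu, rfl⟩ hne
  by_cases h0 : u 0 = 0
  · -- vertical line
    set N := (fun w : Plane => w 0 * p 0 + w 1) '' K with hN
    have hsub : {q | ∃ t : ℝ, q = p + t • u} ∩ dualUnion K ⊆ (fun y => pt (p 0) y) '' N := by
      rintro q ⟨⟨t, rfl⟩, hq⟩
      obtain ⟨w, hw, he⟩ := mem_dualUnion.1 hq
      have hq0 : (p + t • u) 0 = p 0 := by
        show p 0 + t * u 0 = p 0
        rw [h0, mul_zero, add_zero]
      refine ⟨(p + t • u) 1, ⟨w, hw, ?_⟩, ?_⟩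
      · rw [he, hq0]
      · rw [← hq0]; exact pt_eta _
    refine measure_mono_null hsub ?_
    rw [(isometry_vert (p 0)).hausdorffMeasure_image (Or.inl zero_le_one) N,
      MeasureTheory.hausdorffMeasure_real]
    exact slice_null hproj (p 0)
  · -- non-vertical line
    set a : ℝ := u 1 / u 0 with ha
    set b : ℝ := p 1 - a * p 0 with hb
    have hline : {q | ∃ t : ℝ, q = p + t • u} = lineAB a b := by
      ext q
      constructor
      · rintro ⟨t, rfl⟩
        show (p + t • u) 1 = a * (p + t • u) 0 + b
        show p 1 + t * u 1 = a * (p 0 + t * u 0) + b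
        rw [hb, ha]
        field_simp
        ring
      · intro hq
        refine ⟨(q 0 - p 0) / u 0, ?_⟩
        ext i
        fin_cases i
        · show q 0 = p 0 + (q 0 - p 0) / u 0 * u 0
          field_simp
          ring
        · show q 1 = p 1 + (q 0 - p 0) / u 0 * u 1
          have hq' : q 1 = a * q 0 + b := hq
          rw [hq', hb, ha]
          field_simp
          ring
    rw [hline] at hne ⊢
    set v : Plane := pt a b with hv
    have hvK : v ∉ K := by
      intro hvmem
      exact hne ⟨v, hvmem, rfl⟩
    set X : Set ℝ := {x | ∃ w ∈ K, a * x + b = w 0 * x + w 1} with hX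
    have hXsub : X ⊆ ⋃ n : ℕ, (fun w : Plane => -(w 1) / (w 0)) '' (radialProj v K ∩ Aset n) := by
      rintro x ⟨w, hw, hx⟩
      have hwv : w ≠ v := fun h => hvK (h ▸ hw)
      have hr : (0:ℝ) < ‖w - v‖ := by
        rw [norm_pos_iff]; exact sub_ne_zero.2 hwv
      set z : Plane := ‖w - v‖⁻¹ • (w - v) with hz
      have hzmem : z ∈ radialProj v K := ⟨w, hw, hwv, rfl⟩
      have hz0 : z 0 = ‖w - v‖⁻¹ * (w 0 - a) := rfl
      have hz1 : z 1 = ‖w - v‖⁻¹ * (w 1 - b) := rfl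
      have hw0a : w 0 ≠ a := by
        intro hEq
        apply hwv
        have hwb : w 1 = b := by
          rw [hEq] at hx; linarith
        ext i; fin_cases i
        · show w 0 = a; exact hEq
        · show w 1 = b; exact hwb
      have hz0ne : z 0 ≠ 0 := by
        rw [hz0]
        exact mul_ne_zero (inv_ne_zero hr.ne') (sub_ne_zero.2 hw0a)
      have hznorm : ‖z‖ = 1 := by
        rw [hz, norm_smul, norm_inv, norm_norm]
        exact inv_mul_cancel₀ hr.ne'
      have habs0 : |z 0| ≤ 2 := le_trans (abs_coord_le_norm z 0) (by rw [hznorm]; norm_num)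
      have habs1 : |z 1| ≤ 2 := le_trans (abs_coord_le_norm z 1) (by rw [hznorm]; norm_num)
      have hzpos : (0:ℝ) < |z 0| := abs_pos.2 hz0ne
      obtain ⟨n, hn⟩ := exists_nat_gt (|z 0|)⁻¹
      have hinvle : ((n : ℝ) + 1)⁻¹ ≤ |z 0| := by
        rw [← inv_inv (|z 0|)]
        exact inv_anti₀ (by positivity) (le_of_lt (hn.trans (lt_add_one _)))
      refine mem_iUnion.2 ⟨n, z, ⟨hzmem, hinvle, habs0, habs1⟩, ?_⟩
      have hxw : x * (w 0 - a) = b - w 1 := by nlinarith [hx]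
      show -(z 1) / z 0 = x
      rw [hz0, hz1]
      have hneg : -(‖w - v‖⁻¹ * (w 1 - b)) = ‖w - v‖⁻¹ * (b - w 1) := by ring
      rw [hneg, mul_div_mul_left _ _ (inv_ne_zero hr.ne'), div_eq_iff (sub_ne_zero.2 hw0a)]
      linarith [hxw]
    have hXnull : μH[1] X = 0 := by
      refine measure_mono_null hXsub (measure_iUnion_null fun n => ?_)
      have hle := ((lip_h n).mono (inter_subset_right : radialProj v K ∩ Aset n ⊆ Aset n)).hausdorffMeasure_image_le zero_le_one
      have h2 : μH[1] (radialProj v K ∩ Aset n) = 0 :=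
        measure_mono_null inter_subset_left (hinv v)
      rw [h2, mul_zero] at hle
      exact le_zero_iff.mp hle
    have hsub : lineAB a b ∩ dualUnion K ⊆ (fun x => pt x (a * x + b)) '' X := by
      rintro q ⟨hq1, hq2⟩
      obtain ⟨w, hw, he⟩ := mem_dualUnion.1 hq2
      have hq1' : q 1 = a * q 0 + b := hq1
      refine ⟨q 0, ⟨w, hw, hq1'.symm.trans he⟩, ?_⟩
      show pt (q 0) (a * q 0 + b) = q
      rw [← hq1']
      exact pt_eta q
    refine measure_mono_null hsub ?_
    have hle := (lip_graph a b).hausdorffMeasure_image_le zero_le_one X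
    rw [hXnull, mul_zero] at hle
    exact le_zero_iff.mp hle

/-- If `K ⊆ ℝ²` is compact, invisible from every point of the plane, and all its orthogonal
projections in non-vertical directions (i.e. onto lines spanned by unit vectors not parallel to
`(1,0)`) are Lebesgue-null, then the union `L(K)` of the dual family of `K` has two-dimensional
Lebesgue measure zero, and every line `e ∉ ℒ(K)` meets `L(K)` in a set of 1-dimensional
Hausdorff measure zero. -/
theorem dual_of_invisible_is_small (K : Set Plane) (hK : IsCompact K)
    (hinv : ∀ v : Plane, μH[1] (radialProj v K) = 0)
    (hproj : ∀ u : Plane, ‖u‖ = 1 → (¬ ∃ t : ℝ, u = t • pt 1 0) →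
      volume (orthProj u K) = 0) :
    volume (dualUnion K) = 0 ∧
    ∀ e : Set Plane, IsLine e → e ∉ dualLines K → μH[1] (e ∩ dualUnion K) = 0 := by
  exact ⟨part1 hK hproj, part2 hinv hproj⟩
end
end
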